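/- arXiv:1904.01820 — 3 statements merged into one kernel-verified Lean document; each statement's English description precedes it below -/
import Mathlib

section
/- Let σ be the semicircle law and for x > 2 set G_σ(x) := (x − √(x²−4))/2. Fix θ > 0 and x > 2, define v := 2θ if 2θ ≤ G_σ(x) and v := x − 1/(2θ) otherwise, and define 𝒥 := θ·v − (1/2)·∫ log(1 + 2θv − 2θy) dσ(y). Then: (i) if θ ≤ G_σ(x)/2, 𝒥 = θ²; (ii) if θ > G_σ(x)/2, 𝒥 = θx − 1/2 + (1/2)·log(1/(2θ)) − (1/2)·∫ log|x−y| dσ(y). -/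
open MeasureTheory
open intervalIntegral Real Set Metric
open scoped ENNReal NNReal

noncomputable section

/-- The semicircle law: density `√(4-t²)/(2π)` on `[-2,2]`. -/
def semicircle : Measure ℝ :=
  volume.withDensity fun t => ENNReal.ofReal (Real.sqrt (4 - t ^ 2) / (2 * Real.pi))

/-- `G_σ(x) = (x - √(x²-4))/2` for `x > 2`. -/
def Gsc (x : ℝ) : ℝ := (x - Real.sqrt (x ^ 2 - 4)) / 2

/-- `v(θ,σ,x) = R_σ(2θ) = 2θ` if `2θ ≤ G_σ(x)`, and `x - 1/(2θ)` otherwise. -/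
def vsc (θ x : ℝ) : ℝ := if 2 * θ ≤ Gsc x then 2 * θ else x - 1 / (2 * θ)

/-- The limit of normalized spherical integrals at the semicircle law:
`𝒥 = θ v - (1/2) ∫ log(1 + 2θv - 2θy) dσ(y)`. -/
def Jsc (θ x : ℝ) : ℝ :=
  θ * vsc θ x - (1 / 2) * ∫ y, Real.log (1 + 2 * θ * vsc θ x - 2 * θ * y) ∂semicircle

lemma sqrt_div_sq {x c : ℝ} (hx : 0 ≤ x) (hc : 0 < c) :
    Real.sqrt (x / c ^ 2) = Real.sqrt x / c := by
  rw [Real.sqrt_div hx, Real.sqrt_sq hc.le]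

lemma stieltjes_alg {a b z t : ℝ} (ha0 : a ≠ 0) (hb0 : b ≠ 0) (hzt : z - t ≠ 0)
    (ha2 : a ^ 2 = 4 - t ^ 2) :
    z * ((1 / (a / 2)) * (1 / 2)) - (1 / (2 * a)) * (0 - 2 * t)
      - b * ((1 / (a * b / (2 * (z - t)))) *
        ((z * (2 * (z - t)) - (z * t - 4) * (-2)) / (2 * (z - t)) ^ 2))
    = a / (z - t) := by
  field_simp
  linear_combination (-2) * ha2

lemma stieltjes {z : ℝ} (hz : 2 < z) :
    ∫ t in (-2:ℝ)..2, Real.sqrt (4 - t ^ 2) / (z - t)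
      = Real.pi * (z - Real.sqrt (z ^ 2 - 4)) := by
  have hz2 : 0 < z ^ 2 - 4 := by nlinarith
  set b := Real.sqrt (z ^ 2 - 4) with hb
  have hb0 : 0 < b := Real.sqrt_pos.mpr hz2
  have hb2 : b ^ 2 = z ^ 2 - 4 := Real.sq_sqrt hz2.le
  set A : ℝ → ℝ := fun t => z * Real.arcsin (t / 2) - Real.sqrt (4 - t ^ 2)
      - b * Real.arcsin ((z * t - 4) / (2 * (z - t))) with hA
  have hcont : ContinuousOn A (Icc (-2:ℝ) 2) := by
    apply ContinuousOn.sub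
    apply ContinuousOn.sub
    · exact (continuousOn_const.mul (Real.continuous_arcsin.comp
        (continuous_id.div_const 2)).continuousOn)
    · exact (Real.continuous_sqrt.comp (by continuity)).continuousOn
    · apply continuousOn_const.mul
      apply Real.continuous_arcsin.comp_continuousOn
      apply ContinuousOn.div (by fun_prop) (by fun_prop)
      intro t ht
      have h2 : t < z := lt_of_le_of_lt ht.2 hz
      have : (0:ℝ) < 2 * (z - t) := by linarith
      exact ne_of_gt this
  have hderiv : ∀ t ∈ Ioo (-2:ℝ) 2, HasDerivAt A (Real.sqrt (4 - t ^ 2) / (z - t)) t := by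
    intro t ht
    have h4t : 0 < 4 - t ^ 2 := by nlinarith [ht.1, ht.2]
    set a := Real.sqrt (4 - t ^ 2) with ha
    have ha0 : 0 < a := Real.sqrt_pos.mpr h4t
    have ha2 : a ^ 2 = 4 - t ^ 2 := Real.sq_sqrt h4t.le
    have hzt : 0 < z - t := by nlinarith [ht.2]
    -- sqrt(1 - (t/2)^2) = a / 2
    have hs1 : Real.sqrt (1 - (t / 2) ^ 2) = a / 2 := by
      rw [show (1:ℝ) - (t/2)^2 = (4 - t^2) / 2^2 by ring, sqrt_div_sq h4t.le (by norm_num)]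
    -- term 1
    have ht2 : (t/2 : ℝ) ≠ -1 := by intro h; rw [div_eq_iff (by norm_num : (2:ℝ) ≠ 0)] at h; nlinarith [ht.1]
    have ht2' : (t/2 : ℝ) ≠ 1 := by intro h; rw [div_eq_iff (by norm_num : (2:ℝ) ≠ 0)] at h; nlinarith [ht.2]
    have hd1 : HasDerivAt (fun t : ℝ => z * Real.arcsin (t / 2))
        (z * ((1 / Real.sqrt (1 - (t/2) ^ 2)) * (1/2))) t := by
      exact (((Real.hasDerivAt_arcsin ht2 ht2').comp t
        ((hasDerivAt_id t).div_const 2))).const_mul z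
    -- term 2
    have hd2 : HasDerivAt (fun t : ℝ => Real.sqrt (4 - t ^ 2))
        ((1 / (2 * a)) * (0 - 2 * t)) t := by
      have hinner : HasDerivAt (fun t : ℝ => 4 - t ^ 2) (0 - 2 * t) t := by
        simpa using (hasDerivAt_pow 2 t).const_sub (4:ℝ)
      exact (Real.hasDerivAt_sqrt (ne_of_gt h4t)).comp t hinner
    -- term 3: u = (z t - 4)/(2 (z - t))
    set u : ℝ := (z * t - 4) / (2 * (z - t)) with hu
    have hkey : (2 * (z - t)) ^ 2 - (z * t - 4) ^ 2 = (4 - t ^ 2) * (z ^ 2 - 4) := by ring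
    have hu2 : u ^ 2 < 1 := by
      rw [hu, div_pow, div_lt_one (by positivity)]
      nlinarith
    have hune : u ≠ -1 := by intro h; rw [h] at hu2; norm_num at hu2
    have hune' : u ≠ 1 := by intro h; rw [h] at hu2; norm_num at hu2
    have hs2 : Real.sqrt (1 - u ^ 2) = a * b / (2 * (z - t)) := by
      rw [hu, div_pow, show (1:ℝ) - (z*t-4)^2 / (2*(z-t))^2
          = ((4 - t^2) * (z^2 - 4)) / (2*(z-t))^2 by field_simp; ring,
        show ((2:ℝ)*(z-t))^2 = (2*(z-t))^2 from rfl,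
        sqrt_div_sq (by nlinarith) (by positivity), Real.sqrt_mul h4t.le, ← ha, ← hb]
    have hdu : HasDerivAt (fun t : ℝ => (z * t - 4) / (2 * (z - t)))
        ((z * (2 * (z - t)) - (z * t - 4) * (-2)) / (2 * (z - t)) ^ 2) t := by
      apply HasDerivAt.div
      · simpa using ((hasDerivAt_id t).const_mul z).sub_const 4
      · have : HasDerivAt (fun t : ℝ => z - t) (0 - 1) t := by
          simpa using (hasDerivAt_id' t).const_sub z
        simpa using this.const_mul 2
      · positivity
    have hd3 : HasDerivAt (fun t : ℝ => b * Real.arcsin ((z * t - 4) / (2 * (z - t))))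
        (b * ((1 / Real.sqrt (1 - u ^ 2)) *
          ((z * (2 * (z - t)) - (z * t - 4) * (-2)) / (2 * (z - t)) ^ 2))) t := by
      exact ((Real.hasDerivAt_arcsin hune hune').comp t hdu).const_mul b
    have htotal := (hd1.sub hd2).sub hd3
    refine HasDerivAt.congr_deriv htotal ?_
    rw [hs1, hs2]
    exact (stieltjes_alg (ne_of_gt ha0) (ne_of_gt hb0) (ne_of_gt hzt) ha2)
  have hint : IntervalIntegrable (fun t => Real.sqrt (4 - t ^ 2) / (z - t)) volume (-2) 2 := by
    apply ContinuousOn.intervalIntegrable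
    apply ContinuousOn.div
    · exact (Real.continuous_sqrt.comp (by continuity)).continuousOn
    · fun_prop
    · intro t ht
      rw [uIcc_of_le (by norm_num : (-2:ℝ) ≤ 2)] at ht
      have : t < z := lt_of_le_of_lt ht.2 hz
      exact ne_of_gt (by linarith)
  have := integral_eq_sub_of_hasDeriv_right_of_le (by norm_num : (-2:ℝ) ≤ 2) hcont
    (fun t ht => (hderiv t ht).hasDerivWithinAt) hint
  rw [this, hA]
  have e1 : ((2:ℝ)/2) = 1 := by norm_num
  have e2 : ((-2:ℝ)/2) = -1 := by norm_num
  have e3 : (z * 2 - 4) / (2 * (z - 2)) = 1 := by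
    rw [div_eq_one_iff_eq (by intro h; nlinarith)]; ring
  have e4 : (z * (-2) - 4) / (2 * (z - (-2))) = -1 := by
    rw [div_eq_iff (by intro h; nlinarith)]; ring
  simp only [e1, e2, e3, e4, Real.arcsin_one, Real.arcsin_neg_one]
  rw [show (4:ℝ) - 2^2 = 0 by norm_num, show (4:ℝ) - (-2)^2 = 0 by norm_num, Real.sqrt_zero]
  ring

def scW (t : ℝ) : ℝ := Real.sqrt (4 - t ^ 2) / (2 * Real.pi)

lemma scW_nonneg (t : ℝ) : 0 ≤ scW t := by
  unfold scW; positivity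

lemma scW_cont : Continuous scW := by
  unfold scW
  exact (Real.continuous_sqrt.comp (by continuity)).div_const _

lemma scW_zero {t : ℝ} (h : t ∉ Icc (-2:ℝ) 2) : scW t = 0 := by
  have : 4 - t ^ 2 ≤ 0 := by
    simp only [mem_Icc, not_and_or, not_le] at h
    rcases h with h | h <;> nlinarith
  unfold scW
  rw [Real.sqrt_eq_zero_of_nonpos this, zero_div]

lemma semicircle_integral (f : ℝ → ℝ) :
    ∫ y, f y ∂semicircle = ∫ t in (-2:ℝ)..2, f t * scW t := by
  have hd : Measurable fun t : ℝ => (scW t).toNNReal :=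
    (measurable_real_toNNReal.comp scW_cont.measurable)
  have h1 : ∫ y, f y ∂semicircle = ∫ y, (scW y).toNNReal • f y := by
    rw [show semicircle = volume.withDensity fun t => ((scW t).toNNReal : ℝ≥0∞) from rfl]
    exact integral_withDensity_eq_integral_smul hd f
  rw [h1]
  have h2 : ∀ y, (scW y).toNNReal • f y = scW y * f y := by
    intro y
    rw [NNReal.smul_def, smul_eq_mul, Real.coe_toNNReal _ (scW_nonneg y)]
  simp_rw [h2]
  have h3 : (fun y => scW y * f y) = Set.indicator (Icc (-2:ℝ) 2) (fun y => scW y * f y) := by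
    funext y
    by_cases hy : y ∈ Icc (-2:ℝ) 2
    · rw [Set.indicator_of_mem hy]
    · rw [Set.indicator_of_notMem hy, scW_zero hy, zero_mul]
  rw [h3, MeasureTheory.integral_indicator measurableSet_Icc,
    integral_Icc_eq_integral_Ioc, ← intervalIntegral.integral_of_le (by norm_num : (-2:ℝ) ≤ 2)]
  simp_rw [mul_comm]

lemma intW_sqrt : ∫ t in (-2:ℝ)..2, Real.sqrt (4 - t ^ 2) = 2 * Real.pi := by
  have h := integral_comp_mul_left (a := (-1:ℝ)) (b := 1) (fun t => Real.sqrt (4 - t ^ 2)) (c := 2)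
  replace h := h (by norm_num)
  simp only [mul_one, mul_neg] at h
  have h2 : ∀ x : ℝ, Real.sqrt (4 - (2*x) ^ 2) = 2 * Real.sqrt (1 - x ^ 2) := by
    intro x
    rw [show (4:ℝ) - (2*x)^2 = 4 * (1 - x^2) by ring, show (4:ℝ) = 2^2 by norm_num,
      Real.sqrt_mul (by positivity), Real.sqrt_sq (by norm_num)]
  simp_rw [h2] at h
  rw [intervalIntegral.integral_const_mul, integral_sqrt_one_sub_sq] at h
  rw [smul_eq_mul] at h
  linarith [h]

lemma intW : ∫ t in (-2:ℝ)..2, scW t = 1 := by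
  unfold scW
  rw [intervalIntegral.integral_div, intW_sqrt]
  field_simp

lemma int_odd : ∫ t in (-2:ℝ)..2, t * Real.sqrt (4 - t ^ 2) = 0 := by
  have h := integral_comp_neg (a := (-2:ℝ)) (b := 2) (fun t => t * Real.sqrt (4 - t ^ 2))
  simp only [neg_neg] at h
  have h2 : ∀ x : ℝ, -x * Real.sqrt (4 - (-x) ^ 2) = -(x * Real.sqrt (4 - x ^ 2)) := by
    intro x; rw [neg_sq]; ring
  simp_rw [h2, intervalIntegral.integral_neg] at h
  linarith [h]


lemma denom_lower {x t : ℝ} (ht : |t| ≤ 2) : (1 - |x|) ^ 2 ≤ 1 + x ^ 2 - x * t := by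
  have h1 : x * t ≤ |x| * |t| := le_trans (le_abs_self _) (le_of_eq (abs_mul x t))
  have h2 : |x| * |t| ≤ |x| * 2 := mul_le_mul_of_nonneg_left ht (abs_nonneg x)
  nlinarith [sq_abs x]

lemma F_hasDeriv {c s : ℝ} (hc : c < 1) (hs : s ∈ Icc (0:ℝ) c) :
    HasDerivAt (fun x : ℝ => ∫ t in (-2:ℝ)..2, Real.log (1 + x ^ 2 - x * t) * scW t)
      (∫ t in (-2:ℝ)..2, (1 + s ^ 2 - s * t)⁻¹ * (2 * s - t) * scW t) s := by
  set ε : ℝ := (1 - c) / 2 with hε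
  have hc0 : 0 ≤ c := le_trans hs.1 hs.2
  have hε0 : 0 < ε := by rw [hε]; linarith
  -- facts about points in the ball
  have hball : ∀ x ∈ ball s ε, |x| < (1 + c) / 2 := by
    intro x hx
    rw [mem_ball, Real.dist_eq, abs_lt] at hx
    have hs1 := hs.1
    have hs2 := hs.2
    rw [abs_lt]
    constructor <;> nlinarith [hε]
  have hpos : ∀ x : ℝ, |x| < (1 + c) / 2 → ∀ t : ℝ, |t| ≤ 2 →
      ε ^ 2 < 1 + x ^ 2 - x * t := by
    intro x hx t ht
    have := denom_lower (x := x) ht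
    have h1 : ε < 1 - |x| := by rw [hε]; linarith
    nlinarith [abs_nonneg x]
  have hmeas : ∀ x : ℝ, AEStronglyMeasurable (fun t => Real.log (1 + x ^ 2 - x * t) * scW t)
      (volume.restrict (Set.uIoc (-2:ℝ) 2)) := by
    intro x
    exact ((Real.measurable_log.comp (by fun_prop)).mul scW_cont.measurable).aestronglyMeasurable
  have hImem : ∀ t ∈ Set.uIoc (-2:ℝ) 2, |t| ≤ 2 := by
    intro t ht
    rw [uIoc_of_le (by norm_num : (-2:ℝ) ≤ 2)] at ht
    rw [abs_le]; exact ⟨ht.1.le, ht.2⟩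
  have hsx : |s| < (1 + c) / 2 := by
    rw [abs_of_nonneg hs.1]; linarith [hs.2]
  have main := intervalIntegral.hasDerivAt_integral_of_dominated_loc_of_deriv_le
    (F := fun x t => Real.log (1 + x ^ 2 - x * t) * scW t)
    (F' := fun x t => (1 + x ^ 2 - x * t)⁻¹ * (2 * x - t) * scW t)
    (x₀ := s) (a := (-2:ℝ)) (b := 2) (μ := volume)
    (bound := fun t => (4 / ε ^ 2) * scW t) (Metric.ball_mem_nhds s hε0)
    (Filter.Eventually.of_forall fun x => hmeas x)
    ?_ ?_ ?_ ?_ ?_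
  · exact main.2
  · -- integrable at s
    apply ContinuousOn.intervalIntegrable
    apply ContinuousOn.mul _ scW_cont.continuousOn
    apply ContinuousOn.log (by fun_prop)
    intro t ht
    rw [uIcc_of_le (by norm_num : (-2:ℝ) ≤ 2)] at ht
    have h := hpos s hsx t (abs_le.mpr ⟨ht.1, ht.2⟩)
    exact ne_of_gt (lt_of_le_of_lt (sq_nonneg ε) h)
  · apply Measurable.aestronglyMeasurable
    apply Measurable.mul _ scW_cont.measurable
    fun_prop
  · -- bound
    apply Filter.Eventually.of_forall
    intro t ht x hx
    have ht2 := hImem t ht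
    have hxlt := hball x hx
    have hd := hpos x hxlt t ht2
    have hdpos : 0 < 1 + x ^ 2 - x * t := lt_of_le_of_lt (sq_nonneg ε) hd
    rw [norm_mul, norm_mul]
    have h1 : ‖(1 + x ^ 2 - x * t)⁻¹‖ ≤ (ε ^ 2)⁻¹ := by
      rw [Real.norm_eq_abs, abs_of_pos (inv_pos.mpr hdpos)]
      exact inv_anti₀ (by positivity) hd.le
    have h2 : ‖2 * x - t‖ ≤ 4 := by
      rw [Real.norm_eq_abs]
      have h5 : |2 * x - t| ≤ |2 * x| + |t| := abs_sub _ t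
      rw [abs_mul] at h5
      simp only [abs_two] at h5
      nlinarith
    have h3 : ‖scW t‖ = scW t := by rw [Real.norm_eq_abs, abs_of_nonneg (scW_nonneg t)]
    rw [h3]
    calc ‖(1 + x ^ 2 - x * t)⁻¹‖ * ‖2 * x - t‖ * scW t
        ≤ (ε ^ 2)⁻¹ * 4 * scW t := by
          apply mul_le_mul_of_nonneg_right _ (scW_nonneg t)
          exact mul_le_mul h1 h2 (norm_nonneg _) (by positivity)
      _ = (4 / ε ^ 2) * scW t := by ring
  · exact (continuous_const.mul scW_cont).intervalIntegrable _ _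
  · -- differentiability
    apply Filter.Eventually.of_forall
    intro t ht x hx
    have hd := hpos x (hball x hx) t (hImem t ht)
    have hinner : HasDerivAt (fun x : ℝ => 1 + x ^ 2 - x * t) (2 * x - t) x := by
      exact (((hasDerivAt_pow 2 x).const_add 1).sub ((hasDerivAt_id' x).mul_const t)).congr_deriv
        (by push_cast; ring)
    have hdpos : 0 < 1 + x ^ 2 - x * t := lt_of_le_of_lt (sq_nonneg ε) hd
    exact ((Real.hasDerivAt_log (ne_of_gt hdpos)).comp x hinner).mul_const (scW t)

lemma Fprime_eval0 : ∫ t in (-2:ℝ)..2,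
    (1 + (0:ℝ) ^ 2 - 0 * t)⁻¹ * (2 * 0 - t) * scW t = 0 := by
  have : ∀ t : ℝ, (1 + (0:ℝ) ^ 2 - 0 * t)⁻¹ * (2 * 0 - t) * scW t
      = (-(1 / (2 * Real.pi))) * (t * Real.sqrt (4 - t ^ 2)) := by
    intro t; unfold scW; field_simp
    ring
  simp_rw [this]
  rw [intervalIntegral.integral_const_mul, int_odd, mul_zero]

lemma Fprime_eval {s : ℝ} (hs0 : 0 < s) (hs1 : s < 1) :
    ∫ t in (-2:ℝ)..2, (1 + s ^ 2 - s * t)⁻¹ * (2 * s - t) * scW t = s := by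
  set z : ℝ := s + 1 / s with hz
  clear_value z
  have hs0' : s ≠ 0 := ne_of_gt hs0
  have hz2 : 2 < z := by
    rw [hz, ← sub_pos, show s + 1 / s - 2 = (1 - s) ^ 2 / s by field_simp; ring]
    exact div_pos (by nlinarith) hs0
  have hsq : Real.sqrt (z ^ 2 - 4) = 1 / s - s := by
    rw [show z ^ 2 - 4 = (1 / s - s) ^ 2 by rw [hz]; field_simp; ring]
    apply Real.sqrt_sq
    have h1 : 1 ≤ 1 / s := by rw [le_div_iff₀ hs0]; nlinarith
    linarith
  have hcong : ∀ t ∈ uIcc (-2:ℝ) 2, (1 + s ^ 2 - s * t)⁻¹ * (2 * s - t) * scW t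
      = (1 / s) * scW t
        - ((1 - s ^ 2) / (s ^ 2 * (2 * Real.pi))) * (Real.sqrt (4 - t ^ 2) / (z - t)) := by
    intro t ht
    rw [uIcc_of_le (by norm_num : (-2:ℝ) ≤ 2)] at ht
    have hd : 0 < 1 + s ^ 2 - s * t := by nlinarith [ht.1, ht.2]
    have hzt : 0 < z - t := by linarith [ht.2]
    unfold scW
    have hπ := Real.pi_ne_zero
    have hkey : s * z = 1 + s ^ 2 := by
      rw [hz, mul_add, mul_one_div, div_self hs0']
      ring
    have hdenom : 1 + s ^ 2 - s * t = s * (z - t) := by rw [mul_sub, hkey]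
    have hztne : z - t ≠ 0 := ne_of_gt hzt
    rw [hdenom]
    field_simp [hs0', hπ, hztne]
    ring_nf
    linear_combination (-Real.sqrt (4 - t ^ 2)) * hkey
  rw [intervalIntegral.integral_congr hcong, intervalIntegral.integral_sub, 
    intervalIntegral.integral_const_mul, intervalIntegral.integral_const_mul, intW,
    stieltjes hz2, hsq]
  · rw [hz]
    field_simp
    ring
  · exact (continuous_const.mul scW_cont).intervalIntegrable _ _
  · apply ContinuousOn.intervalIntegrable
    apply ContinuousOn.mul continuousOn_const
    apply ContinuousOn.div ((Real.continuous_sqrt.comp (by continuity)).continuousOn)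
      (by fun_prop)
    intro t ht
    rw [uIcc_of_le (by norm_num : (-2:ℝ) ≤ 2)] at ht
    have : t < z := lt_of_le_of_lt ht.2 hz2
    exact ne_of_gt (by linarith)

lemma F_eval {c : ℝ} (hc0 : 0 < c) (hc1 : c < 1) :
    ∫ t in (-2:ℝ)..2, Real.log (1 + c ^ 2 - c * t) * scW t = c ^ 2 / 2 := by
  set F : ℝ → ℝ := fun x => ∫ t in (-2:ℝ)..2, Real.log (1 + x ^ 2 - x * t) * scW t with hF
  have hderiv : ∀ s ∈ uIcc (0:ℝ) c, HasDerivAt F s s := by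
    intro s hs
    rw [uIcc_of_le hc0.le] at hs
    have h := F_hasDeriv hc1 hs
    rcases eq_or_lt_of_le hs.1 with h0 | h0
    · rw [← h0] at h ⊢
      rwa [Fprime_eval0] at h
    · rwa [Fprime_eval h0 (lt_of_le_of_lt hs.2 hc1)] at h
  have hint : IntervalIntegrable (fun s : ℝ => s) volume 0 c :=
    continuous_id.intervalIntegrable _ _
  have key := intervalIntegral.integral_eq_sub_of_hasDerivAt hderiv hint
  rw [integral_id] at key
  have hF0 : F 0 = 0 := by
    rw [hF]
    simp
  rw [hF0, sub_zero] at key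
  rw [show (∫ t in (-2:ℝ)..2, Real.log (1 + c ^ 2 - c * t) * scW t) = F c from rfl, ← key]
  norm_num


/-- Explicit evaluation of the limiting spherical integral `J(σ,θ,x)` at the semicircle
law: it equals `θ²` when `θ ≤ G_σ(x)/2`, and
`θx - 1/2 + (1/2)log(1/(2θ)) - (1/2)∫log|x-y|dσ(y)` when `θ > G_σ(x)/2`. -/
theorem spherical_integral_semicircle_eval (θ x : ℝ) (hθ : 0 < θ) (hx : 2 < x) :
    (θ ≤ Gsc x / 2 → Jsc θ x = θ ^ 2) ∧
    (Gsc x / 2 < θ →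
      Jsc θ x = θ * x - 1 / 2 + (1 / 2) * Real.log (1 / (2 * θ))
        - (1 / 2) * ∫ y, Real.log |x - y| ∂semicircle) := by
  have hx0 : (0:ℝ) < x := by linarith
  have hsq_lt : Real.sqrt (x ^ 2 - 4) < x := by
    have h1 : Real.sqrt (x ^ 2 - 4) < Real.sqrt (x ^ 2) :=
      Real.sqrt_lt_sqrt (by nlinarith) (by nlinarith)
    rwa [Real.sqrt_sq hx0.le] at h1
  have hG0 : 0 < Gsc x := by unfold Gsc; linarith
  have hG1 : Gsc x < 1 := by
    unfold Gsc
    have h1 : x - 2 < Real.sqrt (x ^ 2 - 4) := by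
      rw [show x ^ 2 - 4 = (x-2)*(x+2) by ring]
      nlinarith [Real.sq_sqrt (by nlinarith : (0:ℝ) ≤ (x-2)*(x+2)),
        Real.sqrt_nonneg ((x-2)*(x+2))]
    linarith
  constructor
  · -- case θ ≤ Gsc x / 2
    intro hle
    have h2θ : 2 * θ ≤ Gsc x := by linarith
    have hc0 : 0 < 2 * θ := by linarith
    have hc1 : 2 * θ < 1 := by linarith
    unfold Jsc vsc
    rw [if_pos h2θ]
    rw [semicircle_integral]
    have hcong : ∀ t : ℝ, Real.log (1 + 2 * θ * (2 * θ) - 2 * θ * t) * scW t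
        = Real.log (1 + (2*θ) ^ 2 - (2*θ) * t) * scW t := by
      intro t; ring_nf
    simp_rw [hcong]
    rw [F_eval hc0 hc1]
    ring
  · -- case Gsc x / 2 < θ
    intro hgt
    have h2θ : ¬ (2 * θ ≤ Gsc x) := by push_neg; linarith
    have hθne : (2 * θ) ≠ 0 := by positivity
    unfold Jsc vsc
    rw [if_neg h2θ]
    have hcong : ∀ y : ℝ, Real.log (1 + 2 * θ * (x - 1 / (2 * θ)) - 2 * θ * y)
        = Real.log (2 * θ * (x - y)) := by
      intro y
      congr 1
      field_simp
      ring
    simp_rw [hcong]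
    rw [semicircle_integral (fun y => Real.log (2 * θ * (x - y))),
      semicircle_integral (fun y => Real.log |x - y|)]
    have hsplit : ∀ t ∈ uIcc (-2:ℝ) 2, Real.log (2 * θ * (x - t)) * scW t
        = Real.log (2 * θ) * scW t + Real.log |x - t| * scW t := by
      intro t ht
      rw [uIcc_of_le (by norm_num : (-2:ℝ) ≤ 2)] at ht
      have hxt : 0 < x - t := by linarith [ht.2]
      rw [Real.log_mul hθne (ne_of_gt hxt), abs_of_pos hxt]
      ring
    rw [intervalIntegral.integral_congr hsplit, intervalIntegral.integral_add,
      intervalIntegral.integral_const_mul, intW]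
    · have hlog : Real.log (1 / (2 * θ)) = - Real.log (2 * θ) := by
        rw [one_div, Real.log_inv]
      have hval : θ * (x - 1 / (2 * θ)) = θ * x - 1 / 2 := by
        field_simp
      rw [hval, hlog]
      ring
    · exact (continuous_const.mul scW_cont).intervalIntegrable _ _
    · apply ContinuousOn.intervalIntegrable
      apply ContinuousOn.mul _ scW_cont.continuousOn
      apply ContinuousOn.log (by fun_prop)
      intro t ht
      rw [uIcc_of_le (by norm_num : (-2:ℝ) ≤ 2)] at ht
      have : 0 < x - t := by linarith [ht.2]
      positivity

end
end

section
/- For every real x > 2, the Stieltjes (Cauchy) transform of the semicircle law satisfies G_σ(x) := ∫ 1/(x−t) dσ(t) = (x − √(x²−4))/2, i.e. ∫_{−2}^{2} (x−t)^{−1} · √(4−t²)/(2π) dt = (x − √(x²−4))/2. -/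
open MeasureTheory

noncomputable section

namespace SemicircleAux

/-- Antiderivative of `√(4-t²)/(x-t)`. -/
def F (x t : ℝ) : ℝ :=
  x * Real.arcsin (t / 2) - Real.sqrt (4 - t ^ 2)
    + Real.sqrt (x ^ 2 - 4) * Real.arcsin ((4 - x * t) / (2 * (x - t)))

lemma hasDerivAt_F (x : ℝ) (hx : 2 < x) {t : ℝ} (ht : t ∈ Set.Ioo (-2 : ℝ) 2) :
    HasDerivAt (F x) (Real.sqrt (4 - t ^ 2) / (x - t)) t := by
  obtain ⟨ht1, ht2⟩ := ht
  have hxt : 0 < x - t := by linarith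
  have h4t : 0 < 4 - t ^ 2 := by nlinarith
  have hs : 0 < Real.sqrt (4 - t ^ 2) := Real.sqrt_pos.2 h4t
  have hx4 : 0 < x ^ 2 - 4 := by nlinarith
  have hr : 0 < Real.sqrt (x ^ 2 - 4) := Real.sqrt_pos.2 hx4
  set r := Real.sqrt (x ^ 2 - 4) with hrdef
  set s := Real.sqrt (4 - t ^ 2) with hsdef
  have hr2 : r ^ 2 = x ^ 2 - 4 := Real.sq_sqrt hx4.le
  have hs2 : s ^ 2 = 4 - t ^ 2 := Real.sq_sqrt h4t.le
  -- piece 1 : arcsin (t/2)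
  have hsqrt1 : Real.sqrt (1 - (t / 2) ^ 2) = s / 2 := by
    rw [show (1 - (t / 2) ^ 2 : ℝ) = (s / 2) ^ 2 by rw [div_pow, div_pow, hs2]; ring]
    exact Real.sqrt_sq (by positivity)
  have ha1 : HasDerivAt (fun t : ℝ => Real.arcsin (t / 2))
      (1 / Real.sqrt (1 - (t / 2) ^ 2) * (1 / 2)) t := by
    exact (Real.hasDerivAt_arcsin (by intro h; nlinarith [h]) (by intro h; nlinarith [h])).comp t
      ((hasDerivAt_id t).div_const 2)
  -- piece 2 : sqrt (4 - t²)
  have ha2 : HasDerivAt (fun t : ℝ => Real.sqrt (4 - t ^ 2))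
      (1 / (2 * s) * (-(2 * t ^ 1))) t :=
    (Real.hasDerivAt_sqrt h4t.ne').comp t ((hasDerivAt_pow 2 t).const_sub 4)
  -- piece 3 : arcsin u
  have hu : HasDerivAt (fun t : ℝ => (4 - x * t) / (2 * (x - t)))
      (((-(x * 1)) * (2 * (x - t)) - (4 - x * t) * (2 * (0 - 1))) / (2 * (x - t)) ^ 2) t := by
    exact HasDerivAt.div (((hasDerivAt_id t).const_mul x).const_sub 4)
      (((hasDerivAt_const t x).sub (hasDerivAt_id t)).const_mul 2) (by positivity)
  have hune1 : (4 - x * t) / (2 * (x - t)) ≠ -1 := by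
    intro h
    have := (div_eq_iff (by positivity : (2 * (x - t) : ℝ) ≠ 0)).1 h
    nlinarith
  have hune2 : (4 - x * t) / (2 * (x - t)) ≠ 1 := by
    intro h
    have := (div_eq_iff (by positivity : (2 * (x - t) : ℝ) ≠ 0)).1 h
    nlinarith
  have hsqrt3 : Real.sqrt (1 - ((4 - x * t) / (2 * (x - t))) ^ 2) = r * s / (2 * (x - t)) := by
    rw [show (1 - ((4 - x * t) / (2 * (x - t))) ^ 2 : ℝ) = (r * s / (2 * (x - t))) ^ 2 by
      field_simp
      linear_combination (-(x ^ 2 - 4)) * hs2 - s ^ 2 * hr2]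
    exact Real.sqrt_sq (by positivity)
  have ha3 : HasDerivAt (fun t : ℝ => Real.arcsin ((4 - x * t) / (2 * (x - t))))
      (1 / Real.sqrt (1 - ((4 - x * t) / (2 * (x - t))) ^ 2) *
        (((-(x * 1)) * (2 * (x - t)) - (4 - x * t) * (2 * (0 - 1))) / (2 * (x - t)) ^ 2)) t :=
    by exact (Real.hasDerivAt_arcsin hune1 hune2).comp t hu
  have htotal := ((ha1.const_mul x).sub ha2).add (ha3.const_mul r)
  refine htotal.congr_deriv (Eq.symm ?_)
  rw [hsqrt1, hsqrt3]
  have h2s : (2 : ℝ) * s ≠ 0 := by positivity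
  field_simp
  linear_combination hs2

lemma integral_key (x : ℝ) (hx : 2 < x) :
    ∫ t in (-2 : ℝ)..2, Real.sqrt (4 - t ^ 2) / (x - t)
      = Real.pi * (x - Real.sqrt (x ^ 2 - 4)) := by
  have hne : ∀ t ∈ Set.Icc (-2 : ℝ) 2, x - t ≠ 0 := fun t ht =>
    ne_of_gt (by linarith [ht.2])
  have hcont : ContinuousOn (F x) (Set.Icc (-2 : ℝ) 2) := by
    apply ContinuousOn.add
    · apply ContinuousOn.sub
      · exact (continuous_const.mul (Real.continuous_arcsin.comp
          (continuous_id.div_const 2))).continuousOn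
      · exact (Real.continuous_sqrt.comp (continuous_const.sub (continuous_pow 2))).continuousOn
    · apply ContinuousOn.mul continuousOn_const
      apply Real.continuous_arcsin.comp_continuousOn
      exact ContinuousOn.div (continuousOn_const.sub (continuousOn_const.mul continuousOn_id))
        (continuousOn_const.mul (continuousOn_const.sub continuousOn_id))
        (fun t ht => by have := hne t ht; intro h; apply this; linarith [h])
  have hint : IntervalIntegrable (fun t => Real.sqrt (4 - t ^ 2) / (x - t)) volume (-2) 2 := by
    apply ContinuousOn.intervalIntegrable
    rw [Set.uIcc_of_le (by norm_num)]
    exact ContinuousOn.div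
      (Real.continuous_sqrt.comp (continuous_const.sub (continuous_pow 2))).continuousOn
      (continuousOn_const.sub continuousOn_id) hne
  rw [intervalIntegral.integral_eq_sub_of_hasDerivAt_of_le (by norm_num) hcont
    (fun t ht => hasDerivAt_F x hx ht) hint]
  have hx2 : x - 2 ≠ 0 := ne_of_gt (by linarith)
  have hx2' : x + 2 ≠ 0 := ne_of_gt (by linarith)
  have e1 : ((4 - x * 2) / (2 * (x - 2)) : ℝ) = -1 := by
    rw [div_eq_iff (by intro h; apply hx2; linarith [h])]; ring
  have e2 : ((4 - x * (-2)) / (2 * (x - (-2))) : ℝ) = 1 := by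
    rw [div_eq_iff (by intro h; apply hx2'; linarith [h])]; ring
  simp only [F, e1, e2]
  rw [show ((2 : ℝ) / 2) = 1 by norm_num, show ((-2 : ℝ) / 2) = -1 by norm_num]
  rw [Real.arcsin_one, Real.arcsin_neg_one]
  norm_num [Real.sqrt_eq_zero']
  ring

end SemicircleAux

/-- For `x > 2`, the Stieltjes transform of the semicircle law is
`G_σ(x) = (x - √(x²-4))/2`. -/
theorem stieltjes_transform_semicircle (x : ℝ) (hx : 2 < x) :
    (∫ t, (x - t)⁻¹ ∂semicircle) = (x - Real.sqrt (x ^ 2 - 4)) / 2 ∧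
    (∫ t in (-2 : ℝ)..2, (x - t)⁻¹ * (Real.sqrt (4 - t ^ 2) / (2 * Real.pi)))
      = (x - Real.sqrt (x ^ 2 - 4)) / 2 := by
  have hpi : (0 : ℝ) < Real.pi := Real.pi_pos
  have h2 : (∫ t in (-2 : ℝ)..2, (x - t)⁻¹ * (Real.sqrt (4 - t ^ 2) / (2 * Real.pi)))
      = (x - Real.sqrt (x ^ 2 - 4)) / 2 := by
    have : ∀ t : ℝ, (x - t)⁻¹ * (Real.sqrt (4 - t ^ 2) / (2 * Real.pi))
        = (Real.sqrt (4 - t ^ 2) / (x - t)) * (2 * Real.pi)⁻¹ := fun t => by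
      rw [div_eq_mul_inv, div_eq_mul_inv]; ring
    simp_rw [this]
    rw [intervalIntegral.integral_mul_const, SemicircleAux.integral_key x hx]
    field_simp
  refine ⟨?_, h2⟩
  have hmeas : Measurable fun t : ℝ => Real.toNNReal (Real.sqrt (4 - t ^ 2) / (2 * Real.pi)) := by
    fun_prop
  have hunfold : semicircle
      = volume.withDensity fun t =>
          ((Real.toNNReal (Real.sqrt (4 - t ^ 2) / (2 * Real.pi)) : NNReal) : ENNReal) := rfl
  rw [hunfold, integral_withDensity_eq_integral_smul hmeas]
  have hnn : ∀ t : ℝ, (0 : ℝ) ≤ Real.sqrt (4 - t ^ 2) / (2 * Real.pi) := fun t =>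
    div_nonneg (Real.sqrt_nonneg _) (by positivity)
  have heq : ∀ t : ℝ, (Real.toNNReal (Real.sqrt (4 - t ^ 2) / (2 * Real.pi))) • (x - t)⁻¹
      = (x - t)⁻¹ * (Real.sqrt (4 - t ^ 2) / (2 * Real.pi)) := fun t => by
    rw [NNReal.smul_def, Real.coe_toNNReal _ (hnn t), smul_eq_mul]; ring
  simp_rw [heq]
  have hzero : ∀ t : ℝ, t ∉ Set.Icc (-2 : ℝ) 2 →
      (x - t)⁻¹ * (Real.sqrt (4 - t ^ 2) / (2 * Real.pi)) = 0 := by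
    intro t ht
    have : Real.sqrt (4 - t ^ 2) = 0 := by
      rw [Real.sqrt_eq_zero']
      simp only [Set.mem_Icc, not_and_or, not_le] at ht
      rcases ht with h | h <;> nlinarith
    rw [this]; simp
  rw [← setIntegral_eq_integral_of_forall_compl_eq_zero hzero,
    integral_Icc_eq_integral_Ioc, ← intervalIntegral.integral_of_le (by norm_num : (-2:ℝ) ≤ 2)]
  exact h2

end
end

section
/- Let a ≥ 1 and 2 ≤ x ≤ a + 1/a. Then F_a is non-decreasing on [2, x], so the supremum of F_a over [2, x] is attained at y = x: for every y ∈ [2, x], F_a(y) ≤ F_a(x). -/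
open MeasureTheory

noncomputable section

/-- The limit `J(σ,θ,y)` of normalized spherical integrals at the semicircle law. -/
def Jfun (θ y : ℝ) : ℝ :=
  if 2 * θ ≤ (y - Real.sqrt (y ^ 2 - 4)) / 2 then θ ^ 2
  else θ * y - 1 / 2 - (1 / 2) * Real.log (2 * θ) - (1 / 2) * ∫ t, Real.log |y - t| ∂semicircle

/-- `F_a(y) = J(σ, a/2, y) - y²/4 + ∫ log|y-t| dσ(t)`. -/
def Ffun (a y : ℝ) : ℝ :=
  Jfun (a / 2) y - y ^ 2 / 4 + ∫ t, Real.log |y - t| ∂semicircle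

namespace SemicircleAux

open Real Set

lemma density_nonneg (t : ℝ) : 0 ≤ Real.sqrt (4 - t ^ 2) / (2 * π) := by positivity

lemma density_zero {t : ℝ} (ht : t ∉ Set.Ioo (-2:ℝ) 2) : Real.sqrt (4 - t ^ 2) = 0 := by
  rw [Set.mem_Ioo, not_and_or, not_lt, not_lt] at ht
  apply Real.sqrt_eq_zero'.mpr
  rcases ht with h | h <;> nlinarith

lemma density_measurable :
    Measurable fun t : ℝ => Real.toNNReal (Real.sqrt (4 - t ^ 2) / (2 * π)) := by
  apply measurable_real_toNNReal.comp
  fun_prop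

/-- Transfer integrals over the semicircle law to weighted Lebesgue integrals on `(-2,2)`. -/
lemma sc_integral (g : ℝ → ℝ) :
    ∫ t, g t ∂semicircle
      = ∫ t in Set.Ioo (-2:ℝ) 2, Real.sqrt (4 - t ^ 2) / (2 * π) * g t := by
  have h1 : ∫ t, g t ∂semicircle = ∫ t, Real.sqrt (4 - t ^ 2) / (2 * π) * g t := by
    rw [show semicircle
        = volume.withDensity fun t =>
            ((Real.toNNReal (Real.sqrt (4 - t ^ 2) / (2 * π)) : NNReal) : ENNReal) from rfl,
      integral_withDensity_eq_integral_smul density_measurable]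
    congr 1
    funext t
    rw [NNReal.smul_def, Real.coe_toNNReal _ (density_nonneg t), smul_eq_mul]
  rw [h1]
  exact (setIntegral_eq_integral_of_forall_compl_eq_zero fun t ht => by
    rw [density_zero ht, zero_div, zero_mul]).symm

/-- Integrability over the semicircle law from boundedness of the weighted integrand. -/
lemma sc_integrable {g : ℝ → ℝ} (hg : Measurable g) {C : ℝ}
    (hC : ∀ t ∈ Set.Ioo (-2:ℝ) 2, |Real.sqrt (4 - t ^ 2) / (2 * π) * g t| ≤ C) :
    Integrable g semicircle := by
  rw [semicircle, integrable_withDensity_iff (by fun_prop)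
    (Filter.Eventually.of_forall fun t => ENNReal.ofReal_lt_top)]
  have hEq : (fun t => g t * (ENNReal.ofReal (Real.sqrt (4 - t ^ 2) / (2 * π))).toReal)
      = Set.indicator (Set.Ioo (-2:ℝ) 2)
          (fun t => g t * (Real.sqrt (4 - t ^ 2) / (2 * π))) := by
    funext t
    rw [ENNReal.toReal_ofReal (density_nonneg t)]
    by_cases ht : t ∈ Set.Ioo (-2:ℝ) 2
    · rw [Set.indicator_of_mem ht]
    · rw [Set.indicator_of_notMem ht, density_zero ht, zero_div, mul_zero]
  rw [hEq, integrable_indicator_iff measurableSet_Ioo]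
  apply Measure.integrableOn_of_bounded (M := C) (by simp)
  · exact ((hg.mul (by fun_prop)).aestronglyMeasurable)
  · filter_upwards [ae_restrict_mem measurableSet_Ioo] with t ht
    rw [Real.norm_eq_abs, mul_comm]
    exact hC t ht

/-- The key F.T.C. computation: `∫_{-2}^{2} √(4-t²)/(y-t) dt = (y - √(y²-4)) π` for `y > 2`. -/
lemma sqrt_int {y : ℝ} (hy : 2 < y) :
    ∫ t in Set.Ioo (-2:ℝ) 2, Real.sqrt (4 - t ^ 2) / (y - t)
      = (y - Real.sqrt (y ^ 2 - 4)) * π := by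
  have hy24 : (0:ℝ) < y ^ 2 - 4 := by nlinarith
  set s := Real.sqrt (y ^ 2 - 4) with hsdef
  have hs0 : 0 < s := Real.sqrt_pos.mpr hy24
  have hs2 : s ^ 2 = y ^ 2 - 4 := Real.sq_sqrt hy24.le
  set Φ : ℝ → ℝ := fun t => y * Real.arcsin (t / 2) - Real.sqrt (4 - t ^ 2)
      - s * Real.arcsin ((y * t - 4) / (2 * (y - t))) with hΦ
  have hcont : ContinuousOn Φ (Set.Icc (-2:ℝ) 2) := by
    have c1 : ContinuousOn (fun t : ℝ => y * Real.arcsin (t / 2)) (Set.Icc (-2:ℝ) 2) :=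
      continuousOn_const.mul
        ((Real.continuous_arcsin.comp (continuous_id.div_const 2)).continuousOn)
    have c2 : ContinuousOn (fun t : ℝ => Real.sqrt (4 - t ^ 2)) (Set.Icc (-2:ℝ) 2) :=
      (Real.continuous_sqrt.comp (by continuity)).continuousOn
    have cin : ContinuousOn (fun t : ℝ => (y * t - 4) / (2 * (y - t))) (Set.Icc (-2:ℝ) 2) := by
      apply ContinuousOn.div (by fun_prop) (by fun_prop)
      intro t ht
      have h1 : t ≤ 2 := ht.2
      have : 0 < y - t := by linarith
      positivity
    have c3 : ContinuousOn (fun t : ℝ => s * Real.arcsin ((y * t - 4) / (2 * (y - t))))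
        (Set.Icc (-2:ℝ) 2) :=
      continuousOn_const.mul (Real.continuous_arcsin.comp_continuousOn cin)
    exact (c1.sub c2).sub c3
  have hderiv : ∀ t ∈ Set.Ioo (-2:ℝ) 2,
      HasDerivAt Φ (Real.sqrt (4 - t ^ 2) / (y - t)) t := by
    intro t ht
    obtain ⟨ht1, ht2⟩ := ht
    have h4 : 0 < 4 - t ^ 2 := by nlinarith
    set q := Real.sqrt (4 - t ^ 2) with hqdef
    have hq0 : 0 < q := Real.sqrt_pos.mpr h4
    have hq2 : q ^ 2 = 4 - t ^ 2 := Real.sq_sqrt h4.le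
    have hyt : 0 < y - t := by linarith
    set u := (y * t - 4) / (2 * (y - t)) with hudef
    have hA : Real.sqrt (1 - (t / 2) ^ 2) = q / 2 := by
      rw [show (1:ℝ) - (t / 2) ^ 2 = (q / 2) ^ 2 by
        rw [div_pow, div_pow, hq2]; ring]
      exact Real.sqrt_sq (by positivity)
    have hB : Real.sqrt (1 - u ^ 2) = s * q / (2 * (y - t)) := by
      rw [show (1:ℝ) - u ^ 2 = (s * q / (2 * (y - t))) ^ 2 by
        rw [hudef]
        field_simp
        linear_combination (-(q ^ 2)) * hs2 + (-(y ^ 2 - 4)) * hq2]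
      exact Real.sqrt_sq (by positivity)
    have h1u : 0 < 1 - u ^ 2 := by
      have : 0 < s * q / (2 * (y - t)) := by positivity
      nlinarith [hB ▸ Real.sq_sqrt (show (0:ℝ) ≤ 1 - u ^ 2 from by
        by_contra h
        push_neg at h
        have := Real.sqrt_eq_zero_of_nonpos h.le
        rw [hB] at this
        nlinarith)]
    have hu1 : u ≠ 1 := by intro h; rw [h] at h1u; norm_num at h1u
    have hu1' : u ≠ -1 := by intro h; rw [h] at h1u; norm_num at h1u
    -- derivative of first term
    have d1 : HasDerivAt (fun t : ℝ => y * Real.arcsin (t / 2))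
        (y * (1 / Real.sqrt (1 - (t / 2) ^ 2) * (1 / 2))) t := by
      have hin : HasDerivAt (fun t : ℝ => t / 2) (1 / 2) t := by
        simpa using (hasDerivAt_id t).div_const 2
      have ht2' : t / 2 ≠ -1 := by intro h; nlinarith [h]
      have ht2'' : t / 2 ≠ 1 := by intro h; nlinarith [h]
      exact ((Real.hasDerivAt_arcsin ht2' ht2'').comp t hin).const_mul y
    -- derivative of second term
    have d2 : HasDerivAt (fun t : ℝ => Real.sqrt (4 - t ^ 2))
        (1 / (2 * q) * (-(2 * t))) t := by
      have hin : HasDerivAt (fun t : ℝ => 4 - t ^ 2) (-(2 * t)) t := by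
        simpa using ((hasDerivAt_pow 2 t).const_sub 4)
      exact (Real.hasDerivAt_sqrt h4.ne').comp t hin
    -- derivative of inner rational function
    have d3in : HasDerivAt (fun t : ℝ => (y * t - 4) / (2 * (y - t)))
        ((y * (2 * (y - t)) - (y * t - 4) * (-2)) / (2 * (y - t)) ^ 2) t := by
      have hnum : HasDerivAt (fun t : ℝ => y * t - 4) y t := by
        simpa using ((hasDerivAt_id t).const_mul y).sub_const 4
      have hden : HasDerivAt (fun t : ℝ => 2 * (y - t)) (-2) t := by
        simpa using ((hasDerivAt_id t).const_sub y).const_mul 2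
      exact hnum.div hden (by positivity)
    have d3 : HasDerivAt (fun t : ℝ => s * Real.arcsin ((y * t - 4) / (2 * (y - t))))
        (s * (1 / Real.sqrt (1 - u ^ 2)
          * ((y * (2 * (y - t)) - (y * t - 4) * (-2)) / (2 * (y - t)) ^ 2))) t := by
      exact ((Real.hasDerivAt_arcsin hu1' hu1).comp t d3in).const_mul s
    have hcomb := (d1.sub d2).sub d3
    refine hcomb.congr_deriv ?_
    rw [hA, hB]
    field_simp
    linear_combination (-1 : ℝ) * hq2
  have hnn : ∀ t ∈ Set.Ioo (-2:ℝ) 2, 0 ≤ Real.sqrt (4 - t ^ 2) / (y - t) := by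
    intro t ht
    have : 0 < y - t := by linarith [ht.2]
    positivity
  have hint : IntegrableOn (fun t => Real.sqrt (4 - t ^ 2) / (y - t)) (Set.Ioc (-2:ℝ) 2) :=
    intervalIntegral.integrableOn_deriv_of_nonneg hcont hderiv hnn
  have hftc := intervalIntegral.integral_eq_sub_of_hasDerivAt_of_le (by norm_num) hcont hderiv
    ((intervalIntegrable_iff_integrableOn_Ioc_of_le (by norm_num)).mpr hint)
  rw [intervalIntegral.integral_of_le (by norm_num : (-2:ℝ) ≤ 2),
    integral_Ioc_eq_integral_Ioo] at hftc
  rw [hftc]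
  have hy2 : y - 2 ≠ 0 := by linarith
  have hy2' : y + 2 ≠ 0 := by linarith
  have e1 : ((y * 2 - 4) / (2 * (y - 2))) = 1 := by field_simp; ring
  have e2 : ((y * (-2) - 4) / (2 * (y - (-2)))) = -1 := by rw [div_eq_iff (by intro h; linarith)]; ring
  rw [hΦ]
  simp only [e1, e2]
  rw [show (4:ℝ) - 2 ^ 2 = 0 by norm_num, show (4:ℝ) - (-2) ^ 2 = 0 by norm_num,
    Real.sqrt_zero, show (2:ℝ)/2 = 1 by norm_num, show (-2:ℝ)/2 = -1 by norm_num,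
    Real.arcsin_one, Real.arcsin_neg_one]
  ring

/-- The Stieltjes transform of the semicircle law at `y > 2`. -/
lemma sc_stieltjes {y : ℝ} (hy : 2 < y) :
    ∫ t, (y - t)⁻¹ ∂semicircle = (y - Real.sqrt (y ^ 2 - 4)) / 2 := by
  rw [sc_integral]
  have h1 : (fun t => Real.sqrt (4 - t ^ 2) / (2 * π) * (y - t)⁻¹)
      = fun t => (2 * π)⁻¹ * (Real.sqrt (4 - t ^ 2) / (y - t)) := by
    funext t
    rw [div_eq_mul_inv, div_eq_mul_inv]
    ring
  rw [h1, integral_const_mul, sqrt_int hy]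
  have hπ : π ≠ 0 := Real.pi_ne_zero
  field_simp

lemma abs_log_le {v : ℝ} (hv : 0 < v) : |Real.log v| ≤ v + 2 * (Real.sqrt v)⁻¹ := by
  rcases le_or_gt 1 v with hc | hc
  · rw [abs_of_nonneg (Real.log_nonneg hc)]
    have h1 := Real.log_le_sub_one_of_pos hv
    have h2 : 0 ≤ (Real.sqrt v)⁻¹ := by positivity
    linarith
  · rw [abs_of_neg (Real.log_neg hv hc), ← Real.log_inv]
    have hw : 0 < v⁻¹ := by positivity
    have h1 := Real.log_le_sub_one_of_pos (Real.sqrt_pos.mpr hw)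
    rw [Real.log_sqrt hw.le, Real.sqrt_inv] at h1
    have h2 : 0 < v := hv
    linarith

lemma integrable_log {y : ℝ} (hy : 2 ≤ y) :
    Integrable (fun t => Real.log |y - t|) semicircle := by
  apply sc_integrable (C := 2 * (y + 2) + 4)
  · exact Real.measurable_log.comp ((measurable_const.sub measurable_id).abs)
  · intro t ht
    obtain ⟨ht1, ht2⟩ := ht
    have hyt : 0 < y - t := by linarith
    have h2t : (0:ℝ) < 2 - t := by linarith
    have h4eq : Real.sqrt 4 = 2 := by
      rw [show (4:ℝ) = 2 ^ 2 by norm_num]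
      exact Real.sqrt_sq (by norm_num)
    have hsq : Real.sqrt (4 - t ^ 2) ≤ 2 := by
      rw [← h4eq]
      exact Real.sqrt_le_sqrt (by nlinarith)
    have hsqnn : 0 ≤ Real.sqrt (4 - t ^ 2) := Real.sqrt_nonneg _
    have hfac : Real.sqrt (4 - t ^ 2) / (2 * π) ≤ Real.sqrt (4 - t ^ 2) :=
      div_le_self hsqnn (by nlinarith [Real.pi_gt_three])
    have hfacnn : 0 ≤ Real.sqrt (4 - t ^ 2) / (2 * π) := density_nonneg t
    rw [abs_mul, abs_of_nonneg hfacnn, abs_of_pos hyt]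
    have hlog := abs_log_le hyt
    -- bound the two pieces
    have hb1 : Real.sqrt (4 - t ^ 2) * (y - t) ≤ 2 * (y + 2) := by
      have : y - t ≤ y + 2 := by linarith
      nlinarith
    have hb2 : Real.sqrt (4 - t ^ 2) * (2 * (Real.sqrt (y - t))⁻¹) ≤ 4 := by
      have hsm : Real.sqrt (2 - t) ≤ Real.sqrt (y - t) := Real.sqrt_le_sqrt (by linarith)
      have hsp : 0 < Real.sqrt (2 - t) := Real.sqrt_pos.mpr h2t
      have hinv : (Real.sqrt (y - t))⁻¹ ≤ (Real.sqrt (2 - t))⁻¹ :=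
        inv_anti₀ hsp hsm
      have hsplit : Real.sqrt (4 - t ^ 2) = Real.sqrt (2 - t) * Real.sqrt (2 + t) := by
        rw [show (4:ℝ) - t ^ 2 = (2 - t) * (2 + t) by ring, Real.sqrt_mul h2t.le]
      have h2t2 : Real.sqrt (2 + t) ≤ 2 := by
        rw [← h4eq]
        exact Real.sqrt_le_sqrt (by linarith)
      calc Real.sqrt (4 - t ^ 2) * (2 * (Real.sqrt (y - t))⁻¹)
          ≤ Real.sqrt (4 - t ^ 2) * (2 * (Real.sqrt (2 - t))⁻¹) := by
            apply mul_le_mul_of_nonneg_left _ hsqnn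
            nlinarith
        _ = 2 * Real.sqrt (2 + t) * (Real.sqrt (2 - t) * (Real.sqrt (2 - t))⁻¹) := by
            rw [hsplit]; ring
        _ = 2 * Real.sqrt (2 + t) := by rw [mul_inv_cancel₀ hsp.ne', mul_one]
        _ ≤ 4 := by nlinarith [Real.sqrt_nonneg (2 + t)]
    calc Real.sqrt (4 - t ^ 2) / (2 * π) * |Real.log (y - t)|
        ≤ Real.sqrt (4 - t ^ 2) * |Real.log (y - t)| := by
          apply mul_le_mul_of_nonneg_right hfac (abs_nonneg _)
      _ ≤ Real.sqrt (4 - t ^ 2) * ((y - t) + 2 * (Real.sqrt (y - t))⁻¹) := by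
          apply mul_le_mul_of_nonneg_left hlog hsqnn
      _ = Real.sqrt (4 - t ^ 2) * (y - t)
          + Real.sqrt (4 - t ^ 2) * (2 * (Real.sqrt (y - t))⁻¹) := by ring
      _ ≤ 2 * (y + 2) + 4 := add_le_add hb1 hb2

lemma integrable_inv {y : ℝ} (hy : 2 < y) :
    Integrable (fun t => (y - t)⁻¹) semicircle := by
  apply sc_integrable (C := 2 * (y - 2)⁻¹)
  · fun_prop
  · intro t ht
    obtain ⟨ht1, ht2⟩ := ht
    have hyt : 0 < y - t := by linarith
    have hy2 : (0:ℝ) < y - 2 := by linarith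
    have h4eq : Real.sqrt 4 = 2 := by
      rw [show (4:ℝ) = 2 ^ 2 by norm_num]
      exact Real.sqrt_sq (by norm_num)
    have hsq : Real.sqrt (4 - t ^ 2) ≤ 2 := by
      rw [← h4eq]
      exact Real.sqrt_le_sqrt (by nlinarith)
    have hfac : Real.sqrt (4 - t ^ 2) / (2 * π) ≤ 2 :=
      le_trans (div_le_self (Real.sqrt_nonneg _) (by nlinarith [Real.pi_gt_three])) hsq
    have hinv : (y - t)⁻¹ ≤ (y - 2)⁻¹ := inv_anti₀ hy2 (by linarith)
    rw [abs_mul, abs_of_nonneg (density_nonneg t), abs_of_pos (inv_pos.mpr hyt)]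
    apply mul_le_mul hfac hinv (by positivity) (by norm_num)

/-- `semicircle`-a.e. every point lies in `(-2, 2)`. -/
lemma sc_ae : ∀ᵐ t ∂semicircle, t ∈ Set.Ioo (-2:ℝ) 2 := by
  rw [ae_iff]
  have hms : MeasurableSet {t : ℝ | ¬ t ∈ Set.Ioo (-2:ℝ) 2} := measurableSet_Ioo.compl
  rw [semicircle, withDensity_apply _ hms]
  have h0 : ∫⁻ t in {t : ℝ | ¬ t ∈ Set.Ioo (-2:ℝ) 2},
      ENNReal.ofReal (Real.sqrt (4 - t ^ 2) / (2 * π)) ∂volume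
      = ∫⁻ _ in {t : ℝ | ¬ t ∈ Set.Ioo (-2:ℝ) 2}, 0 ∂volume := by
    apply setLIntegral_congr_fun hms
    intro t ht
    dsimp only
    rw [density_zero ht, zero_div, ENNReal.ofReal_zero]
  rw [h0]
  simp

/-- The key monotonicity estimate for the logarithmic potential. -/
lemma potential_diff {y₁ y₂ : ℝ} (h1 : 2 ≤ y₁) (h12 : y₁ ≤ y₂) (h2 : 2 < y₂) :
    (∫ t, Real.log |y₁ - t| ∂semicircle)
        + (y₂ - y₁) * ((y₂ - Real.sqrt (y₂ ^ 2 - 4)) / 2)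
      ≤ ∫ t, Real.log |y₂ - t| ∂semicircle := by
  have hi1 := integrable_log h1
  have hi2 := integrable_log (le_of_lt h2)
  have hiv := integrable_inv h2
  rw [← sc_stieltjes h2, ← integral_const_mul, ← integral_add hi1 (hiv.const_mul _)]
  apply integral_mono_ae (hi1.add (hiv.const_mul _)) hi2
  filter_upwards [sc_ae] with t ht
  obtain ⟨ht1, ht2⟩ := ht
  simp only [Pi.add_apply]
  have hu : 0 < y₁ - t := by linarith
  have hv : 0 < y₂ - t := by linarith
  rw [abs_of_pos hu, abs_of_pos hv]
  have key := Real.log_le_sub_one_of_pos (div_pos hu hv)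
  rw [Real.log_div hu.ne' hv.ne'] at key
  have heq : (y₁ - t) / (y₂ - t) - 1 = -((y₂ - y₁) * (y₂ - t)⁻¹) := by
    field_simp
    ring
  rw [heq] at key
  linarith

lemma sqrt_le_one {y : ℝ} (hy : 2 ≤ y) : (y - Real.sqrt (y ^ 2 - 4)) / 2 ≤ 1 := by
  have h : y - 2 ≤ Real.sqrt (y ^ 2 - 4) := Real.le_sqrt_of_sq_le (by nlinarith)
  linarith

lemma Ffun_eq {a y : ℝ} (ha : 1 < a) (hy : 2 ≤ y) :
    Ffun a y = a * y / 2 - 1 / 2 - Real.log a / 2 - y ^ 2 / 4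
      + (1 / 2) * ∫ t, Real.log |y - t| ∂semicircle := by
  have hcond : ¬ (2 * (a / 2) ≤ (y - Real.sqrt (y ^ 2 - 4)) / 2) := by
    push_neg
    calc (y - Real.sqrt (y ^ 2 - 4)) / 2 ≤ 1 := sqrt_le_one hy
      _ < a := ha
      _ = 2 * (a / 2) := by ring
  rw [Ffun, Jfun, if_neg hcond, show 2 * (a / 2) = a by ring]
  ring

end SemicircleAux

open SemicircleAux in
/-- For `a ≥ 1` and `2 ≤ x ≤ a + 1/a`, the function `F_a` is non-decreasing on `[2,x]`,
so its supremum over `[2,x]` is attained at `y = x`. -/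
theorem Ffun_max_at_right_end (a x : ℝ) (ha : 1 ≤ a) (hx2 : 2 ≤ x) (hx : x ≤ a + 1 / a) :
    MonotoneOn (Ffun a) (Set.Icc 2 x) ∧
    ∀ y ∈ Set.Icc (2 : ℝ) x, Ffun a y ≤ Ffun a x := by
  have key : MonotoneOn (Ffun a) (Set.Icc 2 x) := by
    rcases eq_or_lt_of_le hx2 with hx2' | hx2'
    · -- degenerate case x = 2 : the interval is a single point
      intro y₁ hy₁ y₂ hy₂ h12
      have e1 : y₁ = 2 := le_antisymm (hx2' ▸ hy₁.2) hy₁.1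
      have e2 : y₂ = 2 := le_antisymm (hx2' ▸ hy₂.2) hy₂.1
      rw [e1, e2]
    · -- main case 2 < x, which forces a > 1
      have ha0 : 0 < a := lt_of_lt_of_le one_pos ha
      have ha1 : 1 < a := by
        rcases eq_or_lt_of_le ha with h | h
        · exfalso
          rw [← h] at hx
          norm_num at hx
          linarith
        · exact h
      intro y₁ hy₁ y₂ hy₂ h12
      rcases eq_or_lt_of_le h12 with rfl | hlt
      · exact le_refl _
      have h2y₂ : 2 < y₂ := lt_of_le_of_lt hy₁.1 hlt
      rw [Ffun_eq ha1 hy₁.1, Ffun_eq ha1 h2y₂.le]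
      have hs₂ : Real.sqrt (y₂ ^ 2 - 4) ≤ a - 1 / a := by
        have hy₂x : y₂ ≤ a + 1 / a := le_trans hy₂.2 hx
        have h1 : y₂ ^ 2 - 4 ≤ (a - 1 / a) ^ 2 := by
          have h2 : 2 ≤ y₂ := hy₁.1.trans h12
          have hinv : 0 < 1 / a := by positivity
          have haa : a * (1 / a) = 1 := by field_simp
          nlinarith [hy₂x, h2, haa]
        calc Real.sqrt (y₂ ^ 2 - 4) ≤ Real.sqrt ((a - 1 / a) ^ 2) := Real.sqrt_le_sqrt h1
          _ = a - 1 / a := Real.sqrt_sq (by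
              have : 1 / a ≤ 1 := by
                rw [div_le_one ha0]; exact ha
              linarith)
      have hpd := potential_diff hy₁.1 h12 h2y₂
      have hy₁x : y₁ ≤ a + 1 / a := le_trans hy₁.2 hx
      have hfac : 0 ≤ (y₂ - y₁) * (2 * a - y₁ - Real.sqrt (y₂ ^ 2 - 4)) := by
        apply mul_nonneg (by linarith)
        linarith
      nlinarith [hpd, hfac]
  refine ⟨key, fun y hy => key hy ⟨hx2, le_refl x⟩ hy.2⟩

end
end
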